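/- Consider two DAGs G and G' with the same skeleton whose topological orderings differ only by altering the position of one node z (with x preceding y in both), and suppose z ∉ rch(G,x,y). If A ∩ ((forb(G,x,y) ∪ forb(G',x,y)) \ (forb(G,x,y) ∩ forb(G',x,y))) = ∅ and A ∩ ⋃_{c ∈ clr(G,x,y)} ((de_G(c) ∪ de_{G'}(c)) \ (de_G(c) ∩ de_{G'}(c))) = ∅, then A is a valid adjustment set in G if and only if A is a valid adjustment set in G'. -/

import Mathlib

/-- Adjacency in the skeleton of a digraph given by edge relation `G`. -/
def skelAdj {V : Type*} (G : V → V → Prop) (a b : V) : Prop := G a b ∨ G b a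

/-- A digraph is acyclic (a DAG) if it has no directed cycle. -/
def IsAcyclicDigraph {V : Type*} (G : V → V → Prop) : Prop :=
  ∀ v, ¬ Relation.TransGen G v v

/-- A path: a list of distinct vertices in which consecutive vertices are
joined by an edge (of either orientation). -/
def IsPath {V : Type*} (G : V → V → Prop) (p : List V) : Prop :=
  p.Nodup ∧ p.Chain' (skelAdj G)

/-- A path between `x` and `y` (written from `x` to `y`). -/
def IsPathBetween {V : Type*} (G : V → V → Prop) (x y : V) (p : List V) : Prop :=
  IsPath G p ∧ p.head? = some x ∧ p.getLast? = some y

/-- A directed (causal) path from `x` to `y`: every edge points towards `y`. -/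
def IsDirPath {V : Type*} (G : V → V → Prop) (x y : V) (p : List V) : Prop :=
  p.Nodup ∧ p.Chain' G ∧ p.head? = some x ∧ p.getLast? = some y

/-- `w` is a collider on the path `p`: both edges of `p` at `w` point into `w`. -/
def IsCollider {V : Type*} (G : V → V → Prop) (p : List V) (w : V) : Prop :=
  ∃ a b, [a, w, b] <:+: p ∧ G a w ∧ G b w

/-- Descendants of a vertex (including the vertex itself). -/
def descendants {V : Type*} (G : V → V → Prop) (v : V) : Set V :=
  {w | Relation.ReflTransGen G v w}

/-- Ancestors of a vertex (including the vertex itself). -/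
def ancestors {V : Type*} (G : V → V → Prop) (v : V) : Set V :=
  {w | Relation.ReflTransGen G w v}

/-- Parents of a vertex. -/
def parents {V : Type*} (G : V → V → Prop) (v : V) : Set V := {w | G w v}

/-- Descendants of a set of vertices. -/
def descendantsSet {V : Type*} (G : V → V → Prop) (W : Set V) : Set V :=
  ⋃ v ∈ W, descendants G v

/-- Ancestors of a set of vertices. -/
def ancestorsSet {V : Type*} (G : V → V → Prop) (W : Set V) : Set V :=
  ⋃ v ∈ W, ancestors G v

/-- Parents of a set of vertices. -/
def parentsSet {V : Type*} (G : V → V → Prop) (W : Set V) : Set V :=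
  ⋃ v ∈ W, parents G v

/-- A path `p` is blocked by a vertex set `A`: it contains a non-collider in `A`,
or a collider `c` with `descendants G c ∩ A = ∅`. -/
def Blocked {V : Type*} (G : V → V → Prop) (A : Set V) (p : List V) : Prop :=
  (∃ w ∈ p, ¬ IsCollider G p w ∧ w ∈ A) ∨
    (∃ c, IsCollider G p c ∧ descendants G c ∩ A = ∅)

/-- `cn G x y`: vertices `z ≠ x` lying on some directed path from `x` to `y`. -/
def cn {V : Type*} (G : V → V → Prop) (x y : V) : Set V :=
  {z | z ≠ x ∧ ∃ p, IsDirPath G x y p ∧ z ∈ p}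

/-- The forbidden set `forb G x y = de(cn(G,x,y)) ∪ {x}`. -/
def forb {V : Type*} (G : V → V → Prop) (x y : V) : Set V :=
  descendantsSet G (cn G x y) ∪ {x}

/-- `A ⊆ V \ {x,y}` is a valid adjustment set in `G`:
(i) `A ∩ forb(G,x,y) = ∅`, and (ii) every non-causal path from `x` to `y` is
blocked by `A`. -/
def IsValidAdjustment {V : Type*} (G : V → V → Prop) (x y : V) (A : Set V) : Prop :=
  x ∉ A ∧ y ∉ A ∧ A ∩ forb G x y = ∅ ∧
    ∀ p, IsPathBetween G x y p → ¬ p.Chain' G → Blocked G A p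

/-- `rch G x y`: vertices lying on some path between `x` and `y` in the skeleton. -/
def rch {V : Type*} (G : V → V → Prop) (x y : V) : Set V :=
  {z | ∃ p, IsPathBetween G x y p ∧ z ∈ p}

/-- Induced subgraph of `G` on a vertex set `S`. -/
def induce {V : Type*} (G : V → V → Prop) (S : Set V) : V → V → Prop :=
  fun a b => G a b ∧ a ∈ S ∧ b ∈ S

/-- `clr G x y`: all colliders on any path from `x` to `y` in the induced
subgraph of `G` on `rch G x y`. -/
def clr {V : Type*} (G : V → V → Prop) (x y : V) : Set V :=
  {c | ∃ p, IsPathBetween (induce G (rch G x y)) x y p ∧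
      IsCollider (induce G (rch G x y)) p c}

/-- The optimal adjustment set `opadj G x y = pa(cn(G,x,y)) \ forb(G,x,y)`. -/
def opadj {V : Type*} (G : V → V → Prop) (x y : V) : Set V :=
  parentsSet G (cn G x y) \ forb G x y

/-- `G^{pd}_{xy}`: `G` with every edge from `x` to a child of `x` that is an
ancestor of `y` removed. -/
def pdGraph {V : Type*} (G : V → V → Prop) (x y : V) : V → V → Prop :=
  fun a b => G a b ∧ ¬ (a = x ∧ b ∈ ancestors G y)

/-- `τ` is a topological ordering of `G`. -/
def IsTopOrder {V : Type*} (G : V → V → Prop) (τ : V → ℕ) : Prop :=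
  Function.Injective τ ∧ ∀ a b, G a b → τ a < τ b

/-- `G'` is obtained from `G` by altering the position of the single node `z`
in a topological ordering of `G` (keeping the skeleton and the orientation of
all edges not incident to `z`, and reorienting edges incident to `z` according
to the new ordering), with `x` preceding `y` in both orderings. -/
def AlterOne {V : Type*} (G G' : V → V → Prop) (z x y : V) : Prop :=
  ∃ τ τ' : V → ℕ,
    IsTopOrder G τ ∧ IsTopOrder G' τ' ∧
    τ x < τ y ∧ τ' x < τ' y ∧
    (∀ a b, a ≠ z → b ≠ z → (τ a < τ b ↔ τ' a < τ' b)) ∧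
    (∀ a b, a ≠ z → b ≠ z → (G a b ↔ G' a b)) ∧
    (∀ a b, a = z ∨ b = z → (G' a b ↔ (skelAdj G a b ∧ τ' a < τ' b)))

lemma chain'_congr {V : Type*} {R S : V → V → Prop} :
    ∀ {p : List V}, (∀ a ∈ p, ∀ b ∈ p, (R a b ↔ S a b)) → (p.Chain' R ↔ p.Chain' S) := by
  intro p
  induction p with
  | nil => simp [List.Chain']
  | cons a l ih =>
    intro h
    show List.IsChain R (a :: l) ↔ List.IsChain S (a :: l)
    rw [List.isChain_cons, List.isChain_cons]
    have hl : ∀ b ∈ l, ∀ c ∈ l, (R b c ↔ S b c) := fun b hb c hc =>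
      h b (List.mem_cons_of_mem _ hb) c (List.mem_cons_of_mem _ hc)
    constructor <;> rintro ⟨h1, h2⟩
    · exact ⟨fun b hb => (h a List.mem_cons_self b
        (List.mem_cons_of_mem _ (List.mem_of_mem_head? hb))).mp (h1 b hb), (ih hl).mp h2⟩
    · exact ⟨fun b hb => (h a List.mem_cons_self b
        (List.mem_cons_of_mem _ (List.mem_of_mem_head? hb))).mpr (h1 b hb), (ih hl).mpr h2⟩

/-- Lemma: targeted adjustment sets. -/
theorem statement5 {V : Type*} (G G' : V → V → Prop) (z x y : V)
    (halt : AlterOne G G' z x y)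
    (hz : z ∉ rch G x y)
    (A : Set V)
    (hforb : A ∩ ((forb G x y ∪ forb G' x y) \ (forb G x y ∩ forb G' x y)) = ∅)
    (hde : A ∩ (⋃ c ∈ clr G x y,
      (descendants G c ∪ descendants G' c) \ (descendants G c ∩ descendants G' c)) = ∅) :
    IsValidAdjustment G x y A ↔ IsValidAdjustment G' x y A := by
  obtain ⟨τ, τ', ⟨hτinj, hτmono⟩, ⟨hτ'inj, hτ'mono⟩, hxy, hxy', hord, hedge, hincz⟩ := halt
  -- the skeletons coincide
  have hne : ∀ a b : V, skelAdj G a b → a ≠ b := by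
    rintro a b (h | h) rfl
    · exact lt_irrefl _ (hτmono _ _ h)
    · exact lt_irrefl _ (hτmono _ _ h)
  have hskel : ∀ a b, skelAdj G' a b ↔ skelAdj G a b := by
    intro a b
    by_cases haz : a = z
    · have h1 := hincz a b (Or.inl haz)
      have h2 := hincz b a (Or.inr haz)
      constructor
      · rintro (h | h)
        · exact (h1.mp h).1
        · rcases (h2.mp h).1 with h' | h'
          · exact Or.inr h'
          · exact Or.inl h'
      · intro h
        have hab : a ≠ b := hne a b h
        rcases lt_or_gt_of_ne (fun he => hab (hτ'inj he)) with hlt | hlt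
        · exact Or.inl (h1.mpr ⟨h, hlt⟩)
        · exact Or.inr (h2.mpr ⟨Or.elim h Or.inr Or.inl, hlt⟩)
    · by_cases hbz : b = z
      · have h1 := hincz a b (Or.inr hbz)
        have h2 := hincz b a (Or.inl hbz)
        constructor
        · rintro (h | h)
          · exact (h1.mp h).1
          · rcases (h2.mp h).1 with h' | h'
            · exact Or.inr h'
            · exact Or.inl h'
        · intro h
          have hab : a ≠ b := hne a b h
          rcases lt_or_gt_of_ne (fun he => hab (hτ'inj he)) with hlt | hlt
          · exact Or.inl (h1.mpr ⟨h, hlt⟩)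
          · exact Or.inr (h2.mpr ⟨Or.elim h Or.inr Or.inl, hlt⟩)
      · unfold skelAdj
        rw [hedge a b haz hbz, hedge b a hbz haz]
  have hpathEq : ∀ p, IsPathBetween G' x y p ↔ IsPathBetween G x y p := by
    intro p
    unfold IsPathBetween IsPath
    rw [chain'_congr (fun a _ b _ => hskel a b)]
  -- vertices on x-y paths are in rch, hence ≠ z
  have hmem_ne : ∀ p, IsPathBetween G x y p → ∀ v ∈ p, v ≠ z := by
    rintro p hp v hv rfl
    exact hz ⟨p, hp, hv⟩
  have hchainEq : ∀ p, IsPathBetween G x y p → (p.Chain' G ↔ p.Chain' G') := by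
    intro p hp
    exact chain'_congr (fun a ha b hb => hedge a b (hmem_ne p hp a ha) (hmem_ne p hp b hb))
  have hcolEq : ∀ p, IsPathBetween G x y p → ∀ w, (IsCollider G p w ↔ IsCollider G' p w) := by
    intro p hp w
    constructor <;> rintro ⟨a, b, hinf, h1, h2⟩
    · have ha := hmem_ne p hp a (hinf.subset (by simp))
      have hw := hmem_ne p hp w (hinf.subset (by simp))
      have hb := hmem_ne p hp b (hinf.subset (by simp))
      exact ⟨a, b, hinf, (hedge a w ha hw).mp h1, (hedge b w hb hw).mp h2⟩
    · have ha := hmem_ne p hp a (hinf.subset (by simp))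
      have hw := hmem_ne p hp w (hinf.subset (by simp))
      have hb := hmem_ne p hp b (hinf.subset (by simp))
      exact ⟨a, b, hinf, (hedge a w ha hw).mpr h1, (hedge b w hb hw).mpr h2⟩
  -- every collider (in G) on an x-y path lies in clr G x y
  have hclr : ∀ p, IsPathBetween G x y p → ∀ c, IsCollider G p c → c ∈ clr G x y := by
    intro p hp c hc
    have hmemS : ∀ v ∈ p, v ∈ rch G x y := fun v hv => ⟨p, hp, hv⟩
    refine ⟨p, ⟨⟨hp.1.1, ?_⟩, hp.2.1, hp.2.2⟩, ?_⟩
    · refine (chain'_congr (R := skelAdj G) ?_).mp hp.1.2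
      intro a ha b hb
      constructor
      · rintro (h | h)
        · exact Or.inl ⟨h, hmemS a ha, hmemS b hb⟩
        · exact Or.inr ⟨h, hmemS b hb, hmemS a ha⟩
      · rintro (⟨h, -, -⟩ | ⟨h, -, -⟩)
        · exact Or.inl h
        · exact Or.inr h
    · obtain ⟨a, b, hinf, h1, h2⟩ := hc
      have ha := hmemS a (hinf.subset (by simp))
      have hw := hmemS c (hinf.subset (by simp))
      have hb := hmemS b (hinf.subset (by simp))
      exact ⟨a, b, hinf, ⟨h1, ha, hw⟩, ⟨h2, hb, hw⟩⟩
  -- descendants of colliders intersect A the same way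
  have hdescEq : ∀ c ∈ clr G x y,
      (descendants G c ∩ A = ∅ ↔ descendants G' c ∩ A = ∅) := by
    intro c hc
    constructor <;> intro h <;> rw [Set.eq_empty_iff_forall_notMem] at h ⊢ <;>
        rintro a ⟨hd, ha⟩
    · have : a ∈ descendants G c := by
        by_contra hnot
        exact Set.eq_empty_iff_forall_notMem.mp hde a
          ⟨ha, Set.mem_biUnion hc ⟨Or.inr hd, fun hi => hnot hi.1⟩⟩
      exact h a ⟨this, ha⟩
    · have : a ∈ descendants G' c := by
        by_contra hnot
        exact Set.eq_empty_iff_forall_notMem.mp hde a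
          ⟨ha, Set.mem_biUnion hc ⟨Or.inl hd, fun hi => hnot hi.2⟩⟩
      exact h a ⟨this, ha⟩
  -- Blocked equivalence on x-y paths
  have hblocked : ∀ p, IsPathBetween G x y p → (Blocked G A p ↔ Blocked G' A p) := by
    intro p hp
    constructor
    · rintro (⟨w, hw, hnc, hwA⟩ | ⟨c, hc, hcd⟩)
      · exact Or.inl ⟨w, hw, fun h => hnc ((hcolEq p hp w).mpr h), hwA⟩
      · exact Or.inr ⟨c, (hcolEq p hp c).mp hc, (hdescEq c (hclr p hp c hc)).mp hcd⟩
    · rintro (⟨w, hw, hnc, hwA⟩ | ⟨c, hc, hcd⟩)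
      · exact Or.inl ⟨w, hw, fun h => hnc ((hcolEq p hp w).mp h), hwA⟩
      · have hcG : IsCollider G p c := (hcolEq p hp c).mpr hc
        exact Or.inr ⟨c, hcG, (hdescEq c (hclr p hp c hcG)).mpr hcd⟩
  -- forb condition equivalence
  have hforbEq : (A ∩ forb G x y = ∅) ↔ (A ∩ forb G' x y = ∅) := by
    rw [Set.eq_empty_iff_forall_notMem, Set.eq_empty_iff_forall_notMem]
    constructor <;> intro h a ⟨ha, hf⟩
    · by_cases hg : a ∈ forb G x y
      · exact h a ⟨ha, hg⟩
      · exact Set.eq_empty_iff_forall_notMem.mp hforb a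
          ⟨ha, Or.inr hf, fun hi => hg hi.1⟩
    · by_cases hg : a ∈ forb G' x y
      · exact h a ⟨ha, hg⟩
      · exact Set.eq_empty_iff_forall_notMem.mp hforb a
          ⟨ha, Or.inl hf, fun hi => hg hi.2⟩
  constructor
  · rintro ⟨hx, hy, hAf, hbl⟩
    refine ⟨hx, hy, hforbEq.mp hAf, fun p hp hnc => ?_⟩
    have hpG := (hpathEq p).mp hp
    exact (hblocked p hpG).mp
      (hbl p hpG (fun h => hnc ((hchainEq p hpG).mp h)))
  · rintro ⟨hx, hy, hAf, hbl⟩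
    refine ⟨hx, hy, hforbEq.mpr hAf, fun p hp hnc => ?_⟩
    exact (hblocked p hp).mpr
      (hbl p ((hpathEq p).mpr hp) (fun h => hnc ((hchainEq p hp).mpr h)))
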